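/- arXiv:gr-qc/0209034 — 2 statements merged into one kernel-verified Lean document; each statement's English description precedes it below -/
import Mathlib

section
/- Let Z₁, Z₂, Z₃ be the left-invariant vector fields on SU(2) generated by the basis u₁, u₂, u₃ of su(2) with [u_i,u_j] = ε_{ijk}u_k, and let Z^α = f(α)Z'^α be the normalized symmetrized operators with f(α) = c√(α₁!α₂!α₃!/|α|!). Then for any smooth complex-valued functions f, g on SU(2), any k ∈ {1,2,3}, and any m ≥ 0: Σ_{|α|=m} ((Z^α Z_k f)(Z^α g) + (Z^α f)(Z^α Z_k g)) = Z_k(Σ_{|α|=m} (Z^α f)(Z^α g)). -/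
open Finset

/-- The Levi-Civita symbol on `Fin 3`, with `ε 0 1 2 = 1`. -/
noncomputable def leviCivita (i j k : Fin 3) : ℝ :=
  (((j : ℝ) - (i : ℝ)) * ((k : ℝ) - (j : ℝ)) * ((k : ℝ) - (i : ℝ))) / 2

/-- The symmetrized operator `Z'^α`: the sum, over all words of length `|α|` in the
letters `1,2,3` containing the letter `i` exactly `α i` times, of the corresponding
composition of the operators `Z_i`. -/
noncomputable def symOp {A : Type*} [AddCommGroup A] [Module ℂ A]
    (Z : Fin 3 → Module.End ℂ A) (α : Fin 3 → ℕ) : Module.End ℂ A :=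
  ∑ w ∈ Finset.univ.filter
      (fun w : Fin (α 0 + α 1 + α 2) → Fin 3 =>
        ∀ i : Fin 3, (Finset.univ.filter (fun j => w j = i)).card = α i),
    (List.ofFn (fun j => Z (w j))).prod

/-- The normalized symmetrized operator `Z^α = f(α) Z'^α` with
`f(α) = c √(α₁!α₂!α₃!/|α|!)`. -/
noncomputable def normSymOp {A : Type*} [AddCommGroup A] [Module ℂ A]
    (c : ℝ) (Z : Fin 3 → Module.End ℂ A) (α : Fin 3 → ℕ) : Module.End ℂ A :=
  ((c * Real.sqrt (((α 0).factorial * (α 1).factorial * (α 2).factorial : ℝ)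
      / ((α 0 + α 1 + α 2).factorial : ℝ)) : ℝ) : ℂ) • symOp Z α

lemma levi_zero (i k : Fin 3) : leviCivita i k i = 0 := by simp [leviCivita]

lemma levi_swap (i k l : Fin 3) : leviCivita l k i = - leviCivita i k l := by
  simp [leviCivita]; ring

section
variable {A : Type*} [AddCommGroup A] [Module ℂ A] (Z : Fin 3 → Module.End ℂ A)

def Zw {n : ℕ} (w : Fin n → Fin 3) : Module.End ℂ A := (List.ofFn fun j => Z (w j)).prod

def cnt {n : ℕ} (w : Fin n → Fin 3) : Fin 3 → ℕ :=
  fun i => (Finset.univ.filter fun j => w j = i).card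

lemma cnt_sum {n : ℕ} (w : Fin n → Fin 3) : ∑ i, cnt w i = n := by
  classical
  have := Finset.card_eq_sum_card_fiberwise (f := w) (s := Finset.univ) (t := Finset.univ)
    (fun x _ => Finset.mem_univ _)
  simpa [cnt] using this.symm

lemma cnt_update {n : ℕ} (w : Fin n → Fin 3) (p : Fin n) (l j : Fin 3) :
    cnt (Function.update w p l) j + (if w p = j then 1 else 0)
      = cnt w j + (if l = j then 1 else 0) := by
  classical
  have h1 : ∀ (v : Fin n → Fin 3), cnt v j = ∑ p' ∈ (Finset.univ.erase p),
      (if v p' = j then 1 else 0) + (if v p = j then 1 else 0) := by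
    intro v
    rw [cnt, Finset.card_filter, ← Finset.sum_erase_add _ _ (Finset.mem_univ p)]
  rw [h1, h1]
  have h2 : ∀ p' ∈ Finset.univ.erase p,
      (if Function.update w p l p' = j then (1:ℕ) else 0) = (if w p' = j then 1 else 0) := by
    intro p' hp'
    rw [Function.update_of_ne (Finset.ne_of_mem_erase hp')]
  rw [Finset.sum_congr rfl h2, Function.update_self]
  omega

lemma Zw_cons {n : ℕ} (a : Fin 3) (v : Fin n → Fin 3) :
    Zw Z (Fin.cons a v) = Z a * Zw Z v := by
  simp [Zw, List.ofFn_succ]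
end

lemma sum4_comm {M : Type*} [AddCommMonoid M] {α β γ δ : Type*}
    [Fintype α] [Fintype β] [Fintype γ] [Fintype δ] (f : α → β → γ → δ → M) :
    ∑ i, ∑ l, ∑ w, ∑ p, f i l w p = ∑ w, ∑ p, ∑ i, ∑ l, f i l w p := by
  have h1 : ∑ q : (α × β) × γ × δ, f q.1.1 q.1.2 q.2.1 q.2.2
      = ∑ q : (γ × δ) × α × β, f q.2.1 q.2.2 q.1.1 q.1.2 :=
    Fintype.sum_equiv (Equiv.prodComm _ _) _ _ (fun q => rfl)
  simpa [Fintype.sum_prod_type] using h1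

section
variable {A : Type*} [AddCommGroup A] [Module ℂ A] (Z : Fin 3 → Module.End ℂ A)
  (hcomm : ∀ i j, Z i * Z j - Z j * Z i = ∑ k, ((leviCivita i j k : ℝ) : ℂ) • Z k)

include hcomm in
lemma tele (k : Fin 3) : ∀ {n : ℕ} (w : Fin n → Fin 3),
    Zw Z w * Z k - Z k * Zw Z w
      = ∑ p, ∑ l, ((leviCivita (w p) k l : ℝ) : ℂ) • Zw Z (Function.update w p l) := by
  intro n
  induction n with
  | zero => intro w; simp [Zw]
  | succ n ih =>
    intro w
    rw [← Fin.cons_self_tail w]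
    set a := w 0
    set v := Fin.tail w
    have key : Zw Z (Fin.cons a v) * Z k - Z k * Zw Z (Fin.cons a v)
        = Z a * (Zw Z v * Z k - Z k * Zw Z v) + (Z a * Z k - Z k * Z a) * Zw Z v := by
      rw [Zw_cons]; noncomm_ring
    rw [key, ih, hcomm]
    rw [Finset.mul_sum, Finset.sum_mul]
    conv_rhs => rw [Fin.sum_univ_succ]
    rw [add_comm]
    congr 1
    · apply Finset.sum_congr rfl
      intro l _
      rw [smul_mul_assoc, Fin.cons_zero, Fin.update_cons_zero, ← Zw_cons]
    · apply Finset.sum_congr rfl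
      intro p _
      rw [Finset.mul_sum]
      apply Finset.sum_congr rfl
      intro l _
      rw [mul_smul_comm, Fin.cons_succ, ← Fin.cons_update, ← Zw_cons]

end

section
variable {A : Type*} [AddCommGroup A] [Module ℂ A] (Z : Fin 3 → Module.End ℂ A)
  (hcomm : ∀ i j, Z i * Z j - Z j * Z i = ∑ k, ((leviCivita i j k : ℝ) : ℂ) • Z k)

noncomputable def symOpN (n : ℕ) (α : Fin 3 → ℕ) : Module.End ℂ A :=
  ∑ w ∈ Finset.univ.filter (fun w : Fin n → Fin 3 => cnt w = α), Zw Z w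

/-- The matrix of `ad (Z k)` in the (unnormalized) symmetrized basis. -/
noncomputable def Mk (k : Fin 3) (α β : Fin 3 → ℕ) : ℂ :=
  ∑ i : Fin 3, ∑ l : Fin 3,
    if (∀ j, β j + (if i = j then 1 else 0) = α j + (if l = j then 1 else 0))
    then ((leviCivita i k l : ℝ) : ℂ) * (β l : ℂ) else 0

include hcomm in
lemma key (k : Fin 3) {n : ℕ} (α : Fin 3 → ℕ) :
    symOpN Z n α * Z k - Z k * symOpN Z n α
      = ∑ β ∈ Finset.Nat.antidiagonalTuple 3 n, Mk k α β • symOpN Z n β := by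
  classical
  -- notation
  set ε : Fin 3 → Fin 3 → ℂ := fun i l => ((leviCivita i k l : ℝ) : ℂ) with hε
  have cond_def : ∀ (i l : Fin 3) (β : Fin 3 → ℕ), Prop := fun i l β =>
    ∀ j, β j + (if i = j then 1 else 0) = α j + (if l = j then 1 else 0)
  -- Right-hand side: expand to a sum over all words
  have hrhs : ∑ β ∈ Finset.Nat.antidiagonalTuple 3 n, Mk k α β • symOpN Z n β
      = ∑ i : Fin 3, ∑ l : Fin 3, ∑ w : Fin n → Fin 3, ∑ p : Fin n,
          if ((∀ j, cnt w j + (if i = j then 1 else 0) = α j + (if l = j then 1 else 0))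
              ∧ w p = l)
          then ε i l • Zw Z w else 0 := by
    have step1 : ∀ β, Mk k α β • symOpN Z n β = ∑ i : Fin 3, ∑ l : Fin 3,
        (if (∀ j, β j + (if i = j then 1 else 0) = α j + (if l = j then 1 else 0))
         then (ε i l * (β l : ℂ)) else 0) • symOpN Z n β := by
      intro β
      rw [Mk, Finset.sum_smul]
      exact Finset.sum_congr rfl fun i _ => by rw [Finset.sum_smul]
    rw [Finset.sum_congr rfl fun β _ => step1 β, Finset.sum_comm]
    refine Finset.sum_congr rfl fun i _ => ?_
    rw [Finset.sum_comm]
    refine Finset.sum_congr rfl fun l _ => ?_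
    -- now fixed i l : sum over β of coefficient times symOpN
    have expand : ∀ β : Fin 3 → ℕ,
        (if (∀ j, β j + (if i = j then 1 else 0) = α j + (if l = j then 1 else 0))
         then (ε i l * (β l : ℂ)) else 0) • symOpN Z n β
        = ∑ w ∈ Finset.univ.filter (fun w : Fin n → Fin 3 => cnt w = β),
            (if (∀ j, cnt w j + (if i = j then 1 else 0) = α j + (if l = j then 1 else 0))
             then (ε i l * ((cnt w l : ℕ) : ℂ)) else 0) • Zw Z w := by
      intro β
      rw [symOpN, Finset.smul_sum]
      refine Finset.sum_congr rfl fun w hw => ?_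
      rw [(Finset.mem_filter.mp hw).2]
    rw [Finset.sum_congr rfl fun β _ => expand β]
    rw [Finset.sum_fiberwise_of_maps_to (g := fun w : Fin n → Fin 3 => cnt w)
      (fun w _ => by
        rw [Finset.Nat.mem_antidiagonalTuple]; exact cnt_sum w)]
    refine Finset.sum_congr rfl fun w _ => ?_
    by_cases hcnd : (∀ j, cnt w j + (if i = j then 1 else 0) = α j + (if l = j then 1 else 0))
    · rw [if_pos hcnd]
      have : ∑ p : Fin n, (if ((∀ j, cnt w j + (if i = j then 1 else 0)
            = α j + (if l = j then 1 else 0)) ∧ w p = l) then ε i l • Zw Z w else 0)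
          = ∑ p : Fin n, (if w p = l then ε i l • Zw Z w else 0) := by
        refine Finset.sum_congr rfl fun p _ => ?_
        by_cases h : w p = l <;> simp [h, hcnd]
      rw [this, Finset.sum_ite, Finset.sum_const, Finset.sum_const_zero, add_zero]
      rw [show (Finset.univ.filter fun p => w p = l).card = cnt w l from rfl]
      rw [← Nat.cast_smul_eq_nsmul ℂ, smul_smul, mul_comm]
    · rw [if_neg hcnd, zero_smul]
      refine (Finset.sum_eq_zero fun p _ => ?_).symm
      rw [if_neg (by tauto)]
  rw [hrhs]
  -- Left-hand side
  rw [symOpN, Finset.sum_mul, Finset.mul_sum, ← Finset.sum_sub_distrib]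
  rw [Finset.sum_congr rfl fun w _ => tele Z hcomm k w]
  -- reorder / reindex the left-hand side
  have hlhs : ∑ w ∈ Finset.univ.filter (fun w : Fin n → Fin 3 => cnt w = α), ∑ p, ∑ l,
        ((leviCivita (w p) k l : ℝ) : ℂ) • Zw Z (Function.update w p l)
      = ∑ i : Fin 3, ∑ l : Fin 3, ∑ w : Fin n → Fin 3, ∑ p : Fin n,
          if (cnt w = α ∧ w p = i) then ε i l • Zw Z (Function.update w p l) else 0 := by
    rw [sum4_comm]
    rw [Finset.sum_filter]
    refine Finset.sum_congr rfl fun w _ => ?_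
    by_cases hw : cnt w = α
    · rw [if_pos hw]
      refine Finset.sum_congr rfl fun p _ => ?_
      rw [Finset.sum_comm]
      refine Finset.sum_congr rfl fun l _ => ?_
      simp [hw, hε, Finset.sum_ite_eq]
    · rw [if_neg hw]
      refine (Finset.sum_eq_zero fun p _ => Finset.sum_eq_zero fun i _ =>
        Finset.sum_eq_zero fun l _ => ?_).symm
      rw [if_neg (by tauto)]
  rw [hlhs]
  -- now both sides are full quadruple sums; compare via a bijection on product sets
  have e1 : ∑ i : Fin 3, ∑ l : Fin 3, ∑ w : Fin n → Fin 3, ∑ p : Fin n,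
        (if (cnt w = α ∧ w p = i) then ε i l • Zw Z (Function.update w p l) else 0)
      = ∑ q ∈ Finset.univ.filter
          (fun q : (Fin 3 × Fin 3) × ((Fin n → Fin 3) × Fin n) =>
            cnt q.2.1 = α ∧ q.2.1 q.2.2 = q.1.1),
          ε q.1.1 q.1.2 • Zw Z (Function.update q.2.1 q.2.2 q.1.2) := by
    rw [Finset.sum_filter]
    simp only [Fintype.sum_prod_type]
  have e2 : ∑ i : Fin 3, ∑ l : Fin 3, ∑ w : Fin n → Fin 3, ∑ p : Fin n,
        (if ((∀ j, cnt w j + (if i = j then 1 else 0) = α j + (if l = j then 1 else 0))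
            ∧ w p = l) then ε i l • Zw Z w else 0)
      = ∑ q ∈ Finset.univ.filter
          (fun q : (Fin 3 × Fin 3) × ((Fin n → Fin 3) × Fin n) =>
            (∀ j, cnt q.2.1 j + (if q.1.1 = j then 1 else 0)
              = α j + (if q.1.2 = j then 1 else 0)) ∧ q.2.1 q.2.2 = q.1.2),
          ε q.1.1 q.1.2 • Zw Z q.2.1 := by
    rw [Finset.sum_filter]
    simp only [Fintype.sum_prod_type]
  rw [e1, e2]
  refine Finset.sum_nbij' (fun q => (q.1, (Function.update q.2.1 q.2.2 q.1.2, q.2.2)))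
    (fun q => (q.1, (Function.update q.2.1 q.2.2 q.1.1, q.2.2))) ?_ ?_ ?_ ?_ ?_
  · rintro ⟨⟨i, l⟩, ⟨w, p⟩⟩ hq
    rw [Finset.mem_filter] at hq ⊢
    dsimp only at hq ⊢
    obtain ⟨-, hcw, hwp⟩ := hq
    refine ⟨Finset.mem_univ _, fun j => ?_, by rw [Function.update_self]⟩
    have h2 := cnt_update w p l j
    rw [hwp] at h2
    rw [h2, hcw]
  · rintro ⟨⟨i, l⟩, ⟨w, p⟩⟩ hq
    rw [Finset.mem_filter] at hq ⊢
    dsimp only at hq ⊢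
    obtain ⟨-, hcw, hwp⟩ := hq
    refine ⟨Finset.mem_univ _, funext fun j => ?_, by rw [Function.update_self]⟩
    have h2 := cnt_update w p i j
    rw [hwp] at h2
    have h3 := hcw j
    omega
  · rintro ⟨⟨i, l⟩, ⟨w, p⟩⟩ hq
    rw [Finset.mem_filter] at hq
    dsimp only at hq ⊢
    obtain ⟨-, -, hwp⟩ := hq
    have h4 : Function.update (Function.update w p l) p i = w := by
      rw [Function.update_idem, ← hwp, Function.update_eq_self]
    rw [h4]
  · rintro ⟨⟨i, l⟩, ⟨w, p⟩⟩ hq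
    rw [Finset.mem_filter] at hq
    dsimp only at hq ⊢
    obtain ⟨-, -, hwp⟩ := hq
    have h4 : Function.update (Function.update w p i) p l = w := by
      rw [Function.update_idem, ← hwp, Function.update_eq_self]
    rw [h4]
  · rintro ⟨⟨i, l⟩, ⟨w, p⟩⟩ _
    rfl

end

lemma fact_swap {α β : Fin 3 → ℕ} {i l : Fin 3}
    (h : ∀ j, β j + (if i = j then 1 else 0) = α j + (if l = j then 1 else 0)) :
    (α 0).factorial * (α 1).factorial * (α 2).factorial * β l
      = (β 0).factorial * (β 1).factorial * (β 2).factorial * α i := by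
  have h0 := h 0
  have h1 := h 1
  have h2 := h 2
  clear h
  fin_cases i <;> fin_cases l <;> simp [Fin.mk_zero, Fin.mk_one] at h0 h1 h2 ⊢ <;> try rfl
  · rw [show β 0 = α 0 from by omega, show β 1 = α 1 from by omega,
      show β 2 = α 2 from by omega]
  · rw [show α 0 = β 0 + 1 from by omega, show β 1 = α 1 + 1 from by omega,
      show α 2 = β 2 from by omega]
    simp only [Nat.factorial_succ]; ring
  · rw [show α 0 = β 0 + 1 from by omega, show β 2 = α 2 + 1 from by omega,
      show α 1 = β 1 from by omega]
    simp only [Nat.factorial_succ]; ring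
  · rw [show α 1 = β 1 + 1 from by omega, show β 0 = α 0 + 1 from by omega,
      show α 2 = β 2 from by omega]
    simp only [Nat.factorial_succ]; ring
  · rw [show β 0 = α 0 from by omega, show β 1 = α 1 from by omega,
      show β 2 = α 2 from by omega]
  · rw [show α 1 = β 1 + 1 from by omega, show β 2 = α 2 + 1 from by omega,
      show α 0 = β 0 from by omega]
    simp only [Nat.factorial_succ]; ring
  · rw [show α 2 = β 2 + 1 from by omega, show β 0 = α 0 + 1 from by omega,
      show α 1 = β 1 from by omega]
    simp only [Nat.factorial_succ]; ring
  · rw [show α 2 = β 2 + 1 from by omega, show β 1 = α 1 + 1 from by omega,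
      show α 0 = β 0 from by omega]
    simp only [Nat.factorial_succ]; ring
  · rw [show β 0 = α 0 from by omega, show β 1 = α 1 from by omega,
      show β 2 = α 2 from by omega]

lemma Mk_antisymm (k : Fin 3) (α β : Fin 3 → ℕ) :
    (((α 0).factorial * (α 1).factorial * (α 2).factorial : ℕ) : ℂ) * Mk k α β
      + (((β 0).factorial * (β 1).factorial * (β 2).factorial : ℕ) : ℂ) * Mk k β α = 0 := by
  rw [Mk, Mk]
  simp only [Finset.mul_sum]
  rw [Finset.sum_comm]
  rw [← Finset.sum_add_distrib]
  refine Finset.sum_eq_zero fun x _ => ?_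
  rw [← Finset.sum_add_distrib]
  refine Finset.sum_eq_zero fun y _ => ?_
  by_cases h : ∀ j, β j + (if y = j then 1 else 0) = α j + (if x = j then 1 else 0)
  · rw [if_pos h, if_pos (fun j => (h j).symm)]
    have hf : (((α 0).factorial * (α 1).factorial * (α 2).factorial * β x : ℕ) : ℂ)
        = (((β 0).factorial * (β 1).factorial * (β 2).factorial * α y : ℕ) : ℂ) := by
      exact_mod_cast congrArg (Nat.cast (R := ℂ)) (fact_swap h)
    push_cast at hf
    have hε2 : ((leviCivita x k y : ℝ) : ℂ) = -((leviCivita y k x : ℝ) : ℂ) := by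
      rw [levi_swap]; push_cast; ring
    rw [hε2]
    push_cast
    linear_combination ((leviCivita y k x : ℝ) : ℂ) * hf
  · rw [if_neg h, if_neg (fun hc => h (fun j => (hc j).symm))]
    ring

section
variable {A : Type*} [AddCommGroup A] [Module ℂ A] (Z : Fin 3 → Module.End ℂ A)

lemma symOp_eq (α : Fin 3 → ℕ) : symOp Z α = symOpN Z (α 0 + α 1 + α 2) α := by
  rw [symOp, symOpN]
  refine Finset.sum_congr (Finset.filter_congr fun w _ => ?_) (fun _ _ => rfl)
  simp [cnt, funext_iff]

lemma symOp_eq_symOpN {m : ℕ} (α : Fin 3 → ℕ) (hα : ∑ i, α i = m) :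
    symOp Z α = symOpN Z m α := by
  have h3 : α 0 + α 1 + α 2 = m := by rw [← hα, Fin.sum_univ_three]
  rw [symOp_eq, h3]
end

/-- Leibniz-commutation lemma: for the normalized symmetrized left-invariant operators
`Z^α` on (smooth complex-valued functions on) SU(2),
`Σ_{|α|=m} ((Z^α Z_k f)(Z^α g) + (Z^α f)(Z^α Z_k g)) = Z_k Σ_{|α|=m} (Z^α f)(Z^α g)`. -/
theorem leibniz_commutation_lemma {A : Type*} [CommRing A] [Algebra ℂ A]
    (Z : Fin 3 → Module.End ℂ A)
    (hder : ∀ i (f g : A), Z i (f * g) = Z i f * g + f * Z i g)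
    (hcomm : ∀ i j, Z i * Z j - Z j * Z i = ∑ k, ((leviCivita i j k : ℝ) : ℂ) • Z k)
    (c : ℝ) (hc : 0 < c) (m : ℕ) (k : Fin 3) (f g : A) :
    ∑ α ∈ Finset.Nat.antidiagonalTuple 3 m,
        (normSymOp c Z α (Z k f) * normSymOp c Z α g
          + normSymOp c Z α f * normSymOp c Z α (Z k g))
      = Z k (∑ α ∈ Finset.Nat.antidiagonalTuple 3 m,
          normSymOp c Z α f * normSymOp c Z α g) := by
  classical
  set T := Finset.Nat.antidiagonalTuple 3 m with hT
  set S : (Fin 3 → ℕ) → Module.End ℂ A := fun α => symOpN Z m α with hS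
  set r : (Fin 3 → ℕ) → ℝ := fun α =>
    c * Real.sqrt (((α 0).factorial * (α 1).factorial * (α 2).factorial : ℝ)
      / (m.factorial : ℝ)) with hr
  have hmem : ∀ α ∈ T, α 0 + α 1 + α 2 = m := fun α hα => by
    rw [hT, Finset.Nat.mem_antidiagonalTuple] at hα
    exact (Fin.sum_univ_three α).symm.trans hα
  have hnorm : ∀ α ∈ T, normSymOp c Z α = ((r α : ℝ) : ℂ) • S α := fun α hα => by
    rw [normSymOp, symOp_eq_symOpN Z α ((Fin.sum_univ_three α).trans (hmem α hα)),
      hmem α hα]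
  have hr2 : ∀ α ∈ T, (((r α)^2 : ℝ) : ℂ)
      = (((c^2 : ℝ) : ℂ) / (m.factorial : ℂ))
        * (((α 0).factorial * (α 1).factorial * (α 2).factorial : ℕ) : ℂ) := fun α hα => by
    have hsq : (r α)^2 = c^2 * (((α 0).factorial * (α 1).factorial * (α 2).factorial : ℝ)
        / (m.factorial : ℝ)) := by
      rw [hr, mul_pow, Real.sq_sqrt (by positivity)]
    rw [hsq]
    push_cast
    ring
  rw [map_sum]
  rw [Finset.sum_congr rfl fun α (_ : α ∈ T) =>
    hder k (normSymOp c Z α f) (normSymOp c Z α g)]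
  rw [← sub_eq_zero, ← Finset.sum_sub_distrib]
  have hsummand : ∀ α ∈ T,
      (normSymOp c Z α (Z k f) * normSymOp c Z α g
        + normSymOp c Z α f * normSymOp c Z α (Z k g))
      - (Z k (normSymOp c Z α f) * normSymOp c Z α g
        + normSymOp c Z α f * Z k (normSymOp c Z α g))
      = ∑ β ∈ T, ((((r α)^2 : ℝ) : ℂ) * Mk k α β) • (S β f * S α g + S α f * S β g) := by
    intro α hα
    have hKey : S α * Z k - Z k * S α = ∑ β ∈ T, Mk k α β • S β := key Z hcomm k α
    have hDf : ∀ x : A, (((r α : ℝ) : ℂ) • S α) (Z k x) - Z k ((((r α : ℝ) : ℂ) • S α) x)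
        = ∑ β ∈ T, (((r α : ℝ) : ℂ) * Mk k α β) • (S β x) := by
      intro x
      have h1 : (((r α : ℝ) : ℂ) • S α) (Z k x) - Z k ((((r α : ℝ) : ℂ) • S α) x)
          = ((((r α : ℝ) : ℂ) • (S α * Z k - Z k * S α)) : Module.End ℂ A) x := by
        simp [Module.End.mul_apply, smul_sub, map_smul]
      rw [h1, hKey, Finset.smul_sum]
      rw [LinearMap.sum_apply]
      refine Finset.sum_congr rfl fun β _ => ?_
      simp [smul_smul]
    rw [hnorm α hα]
    have expand : ∀ x1 x2 x3 x4 y w : A,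
        (x1 * y + w * x2) - (x3 * y + w * x4) = (x1 - x3) * y + w * (x2 - x4) := by
      intros; ring
    rw [expand]
    rw [hDf f, hDf g]
    rw [Finset.sum_mul, Finset.mul_sum, ← Finset.sum_add_distrib]
    refine Finset.sum_congr rfl fun β _ => ?_
    have hcast : (((r α)^2 : ℝ) : ℂ) = ((r α : ℝ) : ℂ) * ((r α : ℝ) : ℂ) := by
      push_cast; ring
    simp only [LinearMap.smul_apply]
    rw [hcast, smul_mul_smul_comm, smul_mul_smul_comm, smul_add]
    congr 1
    · congr 1; ring
    · congr 1; ring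
  rw [Finset.sum_congr rfl hsummand]
  -- antisymmetry kills the double sum
  have hNanti : ∀ α ∈ T, ∀ β ∈ T,
      (((r α)^2 : ℝ) : ℂ) * Mk k α β = -((((r β)^2 : ℝ) : ℂ) * Mk k β α) := by
    intro α hα β hβ
    rw [hr2 α hα, hr2 β hβ]
    have h := Mk_antisymm k α β
    linear_combination (((c^2 : ℝ) : ℂ) / (m.factorial : ℂ)) * h
  have hGswap : ∀ α ∈ T, ∀ β ∈ T,
      ((((r α)^2 : ℝ) : ℂ) * Mk k α β) • (S β f * S α g + S α f * S β g)
        = -(((((r β)^2 : ℝ) : ℂ) * Mk k β α) • (S α f * S β g + S β f * S α g)) := by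
    intro α hα β hβ
    rw [hNanti α hα β hβ, neg_smul, neg_inj, add_comm]
  have h4 : ∑ α ∈ T, ∑ β ∈ T,
        ((((r α)^2 : ℝ) : ℂ) * Mk k α β) • (S β f * S α g + S α f * S β g)
      = - ∑ α ∈ T, ∑ β ∈ T,
        ((((r α)^2 : ℝ) : ℂ) * Mk k α β) • (S β f * S α g + S α f * S β g) := by
    calc ∑ α ∈ T, ∑ β ∈ T,
          ((((r α)^2 : ℝ) : ℂ) * Mk k α β) • (S β f * S α g + S α f * S β g)
        = ∑ β ∈ T, ∑ α ∈ T,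
          ((((r α)^2 : ℝ) : ℂ) * Mk k α β) • (S β f * S α g + S α f * S β g) :=
        Finset.sum_comm
      _ = ∑ β ∈ T, ∑ α ∈ T,
          -(((((r β)^2 : ℝ) : ℂ) * Mk k β α) • (S α f * S β g + S β f * S α g)) :=
        Finset.sum_congr rfl fun β hβ => Finset.sum_congr rfl fun α hα =>
          hGswap α hα β hβ
      _ = - ∑ β ∈ T, ∑ α ∈ T,
          ((((r β)^2 : ℝ) : ℂ) * Mk k β α) • (S α f * S β g + S β f * S α g) := by
        simp only [Finset.sum_neg_distrib]
  have h5 : (2 : ℂ) • (∑ α ∈ T, ∑ β ∈ T,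
      ((((r α)^2 : ℝ) : ℂ) * Mk k α β) • (S β f * S α g + S α f * S β g)) = 0 := by
    rw [two_smul]
    nth_rewrite 2 [h4]
    exact add_neg_cancel _
  have h6 := congrArg (fun x => ((2 : ℂ))⁻¹ • x) h5
  simpa [smul_smul] using h6
end

section
/- Suppose u: [0,1) → ℝ is continuous, non-negative, and satisfies (1-t)·u(t) ≤ u(0) + 4∫_0^t u(s) ds for all t ∈ [0,1). Then u(t) ≤ (1-t)^{-5} u(0) for all t ∈ [0,1). -/
open Set

/-- Gronwall consequence of the crude energy estimate: if
`(1-t)u(t) ≤ u(0) + 4∫₀ᵗ u`, then `u(t) ≤ (1-t)⁻⁵ u(0)` on `[0,1)`. -/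
theorem crude_energy_estimate (u : ℝ → ℝ)
    (huc : ContinuousOn u (Ico (0:ℝ) 1))
    (hunn : ∀ t ∈ Ico (0:ℝ) 1, 0 ≤ u t)
    (hu : ∀ t ∈ Ico (0:ℝ) 1, (1 - t) * u t ≤ u 0 + 4 * ∫ s in (0:ℝ)..t, u s) :
    ∀ t ∈ Ico (0:ℝ) 1, u t ≤ (1 - t)⁻¹ ^ 5 * u 0 := by
  intro T hT
  obtain ⟨hT0, hT1⟩ := hT
  rcases eq_or_lt_of_le hT0 with h0 | h0
  · simp [← h0]
  set v : ℝ → ℝ := fun t => u 0 + 4 * ∫ s in (0:ℝ)..t, u s with hv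
  set F : ℝ → ℝ := fun t => v t * (1 - t) ^ 4 with hF
  have hsub : Icc (0:ℝ) T ⊆ Ico 0 1 := fun x hx => ⟨hx.1, lt_of_le_of_lt hx.2 hT1⟩
  have hucT : ContinuousOn u (Icc 0 T) := huc.mono hsub
  have hintT : MeasureTheory.IntegrableOn u (uIcc 0 T) MeasureTheory.volume := by
    rw [uIcc_of_le hT0]
    exact hucT.integrableOn_compact isCompact_Icc
  have hvC : ContinuousOn v (Icc 0 T) := by
    have := intervalIntegral.continuousOn_primitive_interval hintT
    rw [uIcc_of_le hT0] at this
    exact continuousOn_const.add (continuousOn_const.mul this)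
  have hFC : ContinuousOn F (Icc 0 T) :=
    hvC.mul ((continuousOn_const.sub continuousOn_id).pow 4)
  have hderiv : ∀ x ∈ Ioo (0:ℝ) T, HasDerivAt F
      (4 * u x * (1 - x) ^ 4 + v x * (4 * (1 - x) ^ 3 * (-1))) x := by
    intro x hx
    have hx1 : x < 1 := lt_trans hx.2 hT1
    have hxmem : Ico (0:ℝ) 1 ∈ nhds x :=
      Ico_mem_nhds hx.1 hx1
    have hcx : ContinuousAt u x := (huc x ⟨le_of_lt hx.1, hx1⟩).continuousAt hxmem
    have hint : IntervalIntegrable u MeasureTheory.volume 0 x := by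
      apply (hintT.mono_set ?_).intervalIntegrable
      rw [uIcc_of_le hT0, uIcc_of_le (le_of_lt hx.1)]
      exact Icc_subset_Icc le_rfl (le_of_lt hx.2)
    have hmeas : StronglyMeasurableAtFilter u (nhds x) MeasureTheory.volume :=
      (huc.mono Ioo_subset_Ico_self).stronglyMeasurableAtFilter isOpen_Ioo x ⟨hx.1, hx1⟩
    have hI : HasDerivAt (fun t => ∫ s in (0:ℝ)..t, u s) (u x) x :=
      intervalIntegral.integral_hasDerivAt_right hint hmeas hcx
    have hvd : HasDerivAt v (4 * u x) x := by
      exact (hI.const_mul 4).const_add (u 0)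
    have hpoly : HasDerivAt (fun t : ℝ => (1 - t) ^ 4) (4 * (1 - x) ^ 3 * (-1)) x := by
      have : HasDerivAt (fun t : ℝ => 1 - t) (-1) x := by
        simpa using (hasDerivAt_id x).const_sub 1
      simpa using this.fun_pow 4
    simpa [hF] using hvd.fun_mul hpoly
  have hanti : AntitoneOn F (Icc 0 T) := by
    apply antitoneOn_of_deriv_nonpos (convex_Icc 0 T) hFC
    · intro x hx
      rw [interior_Icc] at hx
      exact (hderiv x hx).differentiableAt.differentiableWithinAt
    · intro x hx
      rw [interior_Icc] at hx
      rw [(hderiv x hx).deriv]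
      have hx1 : x < 1 := lt_trans hx.2 hT1
      have h1x : (0:ℝ) < 1 - x := by linarith
      have huv : (1 - x) * u x ≤ v x := hu x ⟨le_of_lt hx.1, hx1⟩
      nlinarith [pow_pos h1x 3, pow_pos h1x 4]
  have hFT : F T ≤ F 0 := hanti (left_mem_Icc.2 hT0) (right_mem_Icc.2 hT0) hT0
  have hF0 : F 0 = u 0 := by simp [hF, hv]
  have h1T : (0:ℝ) < 1 - T := by linarith
  have huT : (1 - T) * u T ≤ v T := hu T ⟨hT0, hT1⟩
  -- v T * (1-T)^4 ≤ u 0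
  rw [hF0] at hFT
  have hfinal : (1 - T) ^ 5 * u T ≤ u 0 := by
    have : (1 - T) ^ 5 * u T = ((1 - T) * u T) * (1 - T) ^ 4 := by ring
    rw [this]
    calc ((1 - T) * u T) * (1 - T) ^ 4 ≤ v T * (1 - T) ^ 4 := by
          apply mul_le_mul_of_nonneg_right huT (le_of_lt (pow_pos h1T 4))
      _ ≤ u 0 := hFT
  rw [inv_pow]
  rw [← div_eq_inv_mul, le_div_iff₀ (pow_pos h1T 5)]
  linarith [hfinal]
end
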